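/- Let A and B be separable unital C*-algebras, and suppose there exist unital *-homomorphisms φ : A → B and ψ : B → A such that ψ ∘ φ is approximately unitarily equivalent to the identity map of A and φ ∘ ψ is approximately unitarily equivalent to the identity map of B. Then A and B are isomorphic, i.e. there exists a *-algebra isomorphism from A onto B. -/

import Mathlib

open Filter Topology

/-- Two maps `φ ψ : A → B` between unital C*-algebras are *approximately unitarily
equivalent* if for every finite subset `F ⊆ A` and every `ε > 0` there is a unitary
`u ∈ B` with `‖u φ(x) u* - ψ(x)‖ < ε` for all `x ∈ F`. -/
def ApproxUnitarilyEquiv {A B : Type*} [CStarAlgebra A] [CStarAlgebra B]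
    (φ ψ : A → B) : Prop :=
  ∀ (F : Finset A) (ε : ℝ), 0 < ε →
    ∃ u : unitary B, ∀ x ∈ F, ‖(u : B) * φ x * star (u : B) - ψ x‖ < ε

namespace Elliott

attribute [local instance] Classical.decEq

variable {A B : Type*} [CStarAlgebra A] [CStarAlgebra B]

@[simps] noncomputable def ad (u : unitary B) : B →⋆ₐ[ℂ] B where
  toFun x := (u : B) * x * star (u : B)
  map_one' := by simp [← Unitary.coe_star, Unitary.coe_mul_star_self]
  map_mul' x y := by
    have h : star (u : B) * (u : B) = 1 := Unitary.coe_star_mul_self u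
    have key : ∀ z : B, star (u:B) * ((u:B) * z) = z := fun z => by
      rw [← mul_assoc, h, one_mul]
    simp only [mul_assoc, key]
  map_zero' := by simp
  map_add' x y := by noncomm_ring
  commutes' c := by
    simp only [Algebra.algebraMap_eq_smul_one, mul_smul_comm, smul_mul_assoc, mul_one]
    rw [← Unitary.coe_star, Unitary.coe_mul_star_self]
  map_star' x := by simp [star_mul, mul_assoc]

lemma norm_ad (u : unitary B) (x : B) : ‖ad u x‖ = ‖x‖ := by
  have : ad u x = ((u : B) * x) * ((star u : unitary B) : B) := rfl
  rw [this, CStarRing.norm_mul_coe_unitary, CStarRing.norm_coe_unitary_mul]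

lemma hom_norm_le (f : A →⋆ₐ[ℂ] B) (x : A) : ‖f x‖ ≤ ‖x‖ :=
  NonUnitalStarAlgHom.norm_apply_le f x

lemma coe_map_unitary (f : A →⋆ₐ[ℂ] B) (u : unitary A) :
    ((Unitary.map (StarMonoidHom.ofClass f) u : unitary B) : B) = f (u : A) := rfl

/-- bound sequence -/
noncomputable def E (n : ℕ) : ℝ := (1/2 : ℝ) ^ n

@[simp] lemma E_def (n : ℕ) : E n = (1/2 : ℝ) ^ n := rfl

lemma Epos (n : ℕ) : 0 < E n := pow_pos (by norm_num) n

lemma E_tendsto : Tendsto E atTop (𝓝 0) :=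
  tendsto_pow_atTop_nhds_zero_of_lt_one (by norm_num) (by norm_num)

/-- Bundle of all the data. -/
structure Ctx (A B : Type*) [CStarAlgebra A] [CStarAlgebra B] where
  φ : A →⋆ₐ[ℂ] B
  ψ : B →⋆ₐ[ℂ] A
  h1 : ApproxUnitarilyEquiv (fun a => ψ (φ a)) (id : A → A)
  h2 : ApproxUnitarilyEquiv (fun b => φ (ψ b)) (id : B → B)
  a : ℕ → A
  b : ℕ → B
  ha : DenseRange a
  hb : DenseRange b

namespace Ctx

variable (c : Ctx A B)

noncomputable def chooseV (F : Finset A) (n : ℕ) : unitary A :=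
  (c.h1 F (E n) (Epos n)).choose

lemma chooseV_spec (F : Finset A) (n : ℕ) : ∀ x ∈ F,
    ‖(c.chooseV F n : A) * c.ψ (c.φ x) * star (c.chooseV F n : A) - x‖ < E n := by
  have := (c.h1 F (E n) (Epos n)).choose_spec
  simpa [chooseV] using this

noncomputable def chooseU (G : Finset B) (n : ℕ) : unitary B :=
  (c.h2 G (E n) (Epos n)).choose

lemma chooseU_spec (G : Finset B) (n : ℕ) : ∀ y ∈ G,
    ‖(c.chooseU G n : B) * c.φ (c.ψ y) * star (c.chooseU G n : B) - y‖ < E n := by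
  have := (c.h2 G (E n) (Epos n)).choose_spec
  simpa [chooseU] using this

noncomputable def wUnit (n : ℕ) (F : Finset A) (u : unitary B) : unitary A :=
  c.chooseV F n * star (Unitary.map (StarMonoidHom.ofClass c.ψ) u)

noncomputable def Gset (n : ℕ) (F : Finset A) (u : unitary B) : Finset B :=
  ((Finset.range (n+1)).image c.b) ∪ F.image (fun x => (u : B) * c.φ x * star (u : B))

noncomputable def FU : ℕ → Finset A × unitary B
  | 0 => ({c.a 0}, 1)
  | n+1 =>
      ((FU n).1 ∪ {c.a (n+1)} ∪ (c.Gset n (FU n).1 (FU n).2).image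
          (fun y => (c.wUnit n (FU n).1 (FU n).2 : A) * c.ψ y
            * star (c.wUnit n (FU n).1 (FU n).2 : A)),
       c.chooseU (c.Gset n (FU n).1 (FU n).2) n
         * star (Unitary.map (StarMonoidHom.ofClass c.φ) (c.wUnit n (FU n).1 (FU n).2)))

noncomputable def Fn (n : ℕ) : Finset A := (c.FU n).1
noncomputable def un (n : ℕ) : unitary B := (c.FU n).2
noncomputable def wn (n : ℕ) : unitary A := c.wUnit n (c.Fn n) (c.un n)
noncomputable def Gn (n : ℕ) : Finset B := c.Gset n (c.Fn n) (c.un n)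

noncomputable def Φn (n : ℕ) : A →⋆ₐ[ℂ] B := (ad (c.un n)).comp c.φ
noncomputable def Ψn (n : ℕ) : B →⋆ₐ[ℂ] A := (ad (c.wn n)).comp c.ψ

lemma Fn_succ (n : ℕ) : c.Fn (n+1) =
    c.Fn n ∪ {c.a (n+1)} ∪ (c.Gn n).image (fun y => c.Ψn n y) := rfl

lemma un_succ (n : ℕ) : c.un (n+1) =
    c.chooseU (c.Gn n) n * star (Unitary.map (StarMonoidHom.ofClass c.φ) (c.wn n)) := rfl

lemma a_mem : ∀ n, c.a n ∈ c.Fn n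
  | 0 => by simp [Fn, FU]
  | n+1 => by
      rw [Fn_succ]
      simp

lemma Fn_subset_succ (n : ℕ) : c.Fn n ⊆ c.Fn (n+1) := by
  rw [Fn_succ]
  intro x hx
  simp [Finset.mem_union, hx]

lemma Fn_mono {m n : ℕ} (h : m ≤ n) : c.Fn m ⊆ c.Fn n := by
  induction n with
  | zero => simpa [Nat.le_zero.mp h] using Finset.Subset.refl _
  | succ n ih =>
      rcases Nat.lt_or_ge m (n+1) with h' | h'
      · exact (ih (Nat.lt_succ_iff.mp h')).trans (c.Fn_subset_succ n)
      · have : m = n+1 := le_antisymm h h'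
        simp [this]

lemma b_mem_Gn {k n : ℕ} (h : k ≤ n) : c.b k ∈ c.Gn n := by
  rw [Gn, Gset]
  apply Finset.mem_union_left
  exact Finset.mem_image_of_mem _ (Finset.mem_range.mpr (Nat.lt_succ_of_le h))

lemma Φn_mem_Gn {x : A} {n : ℕ} (hx : x ∈ c.Fn n) : c.Φn n x ∈ c.Gn n := by
  rw [Gn, Gset]
  apply Finset.mem_union_right
  exact Finset.mem_image_of_mem _ hx

lemma Ψn_mem_Fn {y : B} {n : ℕ} (hy : y ∈ c.Gn n) : c.Ψn n y ∈ c.Fn (n+1) := by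
  rw [Fn_succ]
  apply Finset.mem_union_right
  exact Finset.mem_image_of_mem _ hy

lemma spec1 (n : ℕ) : ∀ x ∈ c.Fn n, ‖c.Ψn n (c.Φn n x) - x‖ < E n := by
  intro x hx
  set p : A := c.ψ ((c.un n : B)) with hp_def
  have hp : star p * p = 1 := by
    rw [hp_def, ← map_star, ← map_mul, Unitary.coe_star_mul_self, map_one]
  have key : ∀ z : A, star p * (p * z) = z := fun z => by rw [← mul_assoc, hp, one_mul]
  have hw : (c.wn n : A) = (c.chooseV (c.Fn n) n : A) * star p := rfl
  have hcalc : c.Ψn n (c.Φn n x)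
      = (c.chooseV (c.Fn n) n : A) * c.ψ (c.φ x) * star (c.chooseV (c.Fn n) n : A) := by
    show (c.wn n : A) * c.ψ ((c.un n : B) * c.φ x * star (c.un n : B)) * star (c.wn n : A)
      = _
    rw [map_mul, map_mul, map_star, hw]
    simp only [← hp_def, star_mul, star_star, mul_assoc, key]
  rw [hcalc]
  exact c.chooseV_spec (c.Fn n) n x hx

lemma spec2 (n : ℕ) : ∀ y ∈ c.Gn n, ‖c.Φn (n+1) (c.Ψn n y) - y‖ < E n := by
  intro y hy
  set p : B := c.φ ((c.wn n : A)) with hp_def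
  have hp : star p * p = 1 := by
    rw [hp_def, ← map_star, ← map_mul, Unitary.coe_star_mul_self, map_one]
  have key : ∀ z : B, star p * (p * z) = z := fun z => by rw [← mul_assoc, hp, one_mul]
  have hu : (c.un (n+1) : B) = (c.chooseU (c.Gn n) n : B) * star p := rfl
  have hcalc : c.Φn (n+1) (c.Ψn n y)
      = (c.chooseU (c.Gn n) n : B) * c.φ (c.ψ y) * star (c.chooseU (c.Gn n) n : B) := by
    show (c.un (n+1) : B) * c.φ ((c.wn n : A) * c.ψ y * star (c.wn n : A))
        * star (c.un (n+1) : B) = _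
    rw [map_mul, map_mul, map_star, hu]
    simp only [← hp_def, star_mul, star_star, mul_assoc, key]
  rw [hcalc]
  exact c.chooseU_spec (c.Gn n) n y hy

lemma tri {X : Type*} [NormedAddCommGroup X] (x y z : X) : ‖x - z‖ ≤ ‖x - y‖ + ‖y - z‖ := by
  simpa [dist_eq_norm] using dist_triangle x y z

lemma cauchy_stepΦ {N n : ℕ} (h : N ≤ n) {x : A} (hx : x ∈ c.Fn N) :
    ‖c.Φn (n+1) x - c.Φn n x‖ ≤ 2 * E n := by
  have hx' : x ∈ c.Fn n := c.Fn_mono h hx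
  have h2' := c.spec2 n (c.Φn n x) (c.Φn_mem_Gn hx')
  have h1' := c.spec1 n x hx'
  have t1 : ‖c.Φn (n+1) x - c.Φn (n+1) (c.Ψn n (c.Φn n x))‖ ≤ E n := by
    rw [← map_sub]
    refine (hom_norm_le _ _).trans ?_
    rw [norm_sub_rev]
    exact h1'.le
  have := tri (c.Φn (n+1) x) (c.Φn (n+1) (c.Ψn n (c.Φn n x))) (c.Φn n x)
  linarith [h2'.le]

lemma cauchy_stepΨ {k n : ℕ} (h : k ≤ n) :
    ‖c.Ψn (n+1) (c.b k) - c.Ψn n (c.b k)‖ ≤ 2 * E n := by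
  have hy : c.b k ∈ c.Gn n := c.b_mem_Gn h
  have h2' := c.spec2 n (c.b k) hy
  have h1' := c.spec1 (n+1) (c.Ψn n (c.b k)) (c.Ψn_mem_Fn hy)
  have t1 : ‖c.Ψn (n+1) (c.b k) - c.Ψn (n+1) (c.Φn (n+1) (c.Ψn n (c.b k)))‖ ≤ E n := by
    rw [← map_sub]
    refine (hom_norm_le _ _).trans ?_
    rw [norm_sub_rev]
    exact h2'.le
  have := tri (c.Ψn (n+1) (c.b k)) (c.Ψn (n+1) (c.Φn (n+1) (c.Ψn n (c.b k)))) (c.Ψn n (c.b k))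
  have hE : E (n+1) ≤ E n := by
    rw [E_def, E_def, pow_succ]
    nlinarith [pow_pos (show (0:ℝ) < 1/2 by norm_num) n]
  linarith [h1'.le]

lemma cauchySeq_aux {X : Type*} [NormedAddCommGroup X] {f : ℕ → X} {K : ℝ}
    (hK : ∀ n, ‖f n‖ ≤ K) (N : ℕ)
    (h : ∀ n, N ≤ n → ‖f (n+1) - f n‖ ≤ 2 * E n) : CauchySeq f := by
  apply cauchySeq_of_le_geometric (1/2 : ℝ) ((2*K+2) * 2^N) (by norm_num)
  intro n
  have hK0 : 0 ≤ K := (norm_nonneg _).trans (hK 0)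
  have hp : (0:ℝ) < (1/2)^n := by positivity
  have h1 : (1:ℝ) ≤ 2^N := one_le_pow₀ (by norm_num : (1:ℝ) ≤ 2)
  rw [dist_eq_norm]
  rcases le_or_gt N n with hn | hn
  · have hb := h n hn
    rw [norm_sub_rev] at hb
    rw [E_def] at hb
    have hC : (2:ℝ) ≤ (2*K+2)*2^N := by nlinarith
    have := mul_le_mul_of_nonneg_right hC hp.le
    linarith
  · have hb : ‖f n - f (n+1)‖ ≤ 2*K := by
      calc ‖f n - f (n+1)‖ ≤ ‖f n‖ + ‖f (n+1)‖ := norm_sub_le _ _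
        _ ≤ 2*K := by linarith [hK n, hK (n+1)]
    have h2 : (1:ℝ) ≤ 2^N * (1/2)^n := by
      have e1 : (2:ℝ)^n * (1/2)^n = 1 := by rw [← mul_pow]; norm_num
      have e2 : (2:ℝ)^n ≤ 2^N := pow_le_pow_right₀ (by norm_num) hn.le
      nlinarith
    nlinarith

lemma norm_Φn_le (n : ℕ) (x : A) : ‖c.Φn n x‖ ≤ ‖x‖ := hom_norm_le _ _
lemma norm_Ψn_le (n : ℕ) (y : B) : ‖c.Ψn n y‖ ≤ ‖y‖ := hom_norm_le _ _

lemma cauchyΦ_mem {x : A} {N : ℕ} (hx : x ∈ c.Fn N) : CauchySeq (fun n => c.Φn n x) :=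
  cauchySeq_aux (fun n => c.norm_Φn_le n x) N (fun n hn => c.cauchy_stepΦ hn hx)

lemma cauchyΨ_mem (k : ℕ) : CauchySeq (fun n => c.Ψn n (c.b k)) :=
  cauchySeq_aux (fun n => c.norm_Ψn_le n (c.b k)) k (fun n hn => c.cauchy_stepΨ hn)

lemma dense_D : Dense (⋃ n, (c.Fn n : Set A)) := by
  have : Set.range c.a ⊆ ⋃ n, (c.Fn n : Set A) := by
    rintro _ ⟨k, rfl⟩
    exact Set.mem_iUnion.mpr ⟨k, c.a_mem k⟩
  exact Dense.mono this c.ha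

lemma lipΦn (n : ℕ) (x y : A) : ‖c.Φn n x - c.Φn n y‖ ≤ ‖x - y‖ := by
  rw [← map_sub]; exact hom_norm_le _ _

lemma lipΨn (n : ℕ) (x y : B) : ‖c.Ψn n x - c.Ψn n y‖ ≤ ‖x - y‖ := by
  rw [← map_sub]; exact hom_norm_le _ _

lemma cauchyΦ (x : A) : CauchySeq (fun n => c.Φn n x) := by
  rw [Metric.cauchySeq_iff]
  intro ε hε
  obtain ⟨y, hy, hxy⟩ : ∃ y ∈ ⋃ n, (c.Fn n : Set A), dist x y < ε/3 := by
    have hx : x ∈ closure (⋃ n, (c.Fn n : Set A)) := c.dense_D x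
    rcases Metric.mem_closure_iff.mp hx (ε/3) (by linarith) with ⟨y, hy, hd⟩
    exact ⟨y, hy, hd⟩
  obtain ⟨N, hN⟩ := Set.mem_iUnion.mp hy
  have hc := c.cauchyΦ_mem hN
  rw [Metric.cauchySeq_iff] at hc
  obtain ⟨M, hM⟩ := hc (ε/3) (by linarith)
  refine ⟨M, fun m hm n hn => ?_⟩
  have d1 : dist (c.Φn m x) (c.Φn m y) ≤ dist x y := by
    rw [dist_eq_norm, dist_eq_norm]; exact c.lipΦn m x y
  have d3 : dist (c.Φn n y) (c.Φn n x) ≤ dist y x := by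
    rw [dist_eq_norm, dist_eq_norm]; exact c.lipΦn n y x
  have := dist_triangle4 (c.Φn m x) (c.Φn m y) (c.Φn n y) (c.Φn n x)
  have hd2 := hM m hm n hn
  rw [dist_comm y x] at d3
  linarith

lemma cauchyΨ (y : B) : CauchySeq (fun n => c.Ψn n y) := by
  rw [Metric.cauchySeq_iff]
  intro ε hε
  obtain ⟨z, hz, hyz⟩ : ∃ z ∈ Set.range c.b, dist y z < ε/3 := by
    have hy : y ∈ closure (Set.range c.b) := c.hb y
    rcases Metric.mem_closure_iff.mp hy (ε/3) (by linarith) with ⟨z, hz, hd⟩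
    exact ⟨z, hz, hd⟩
  obtain ⟨k, rfl⟩ := hz
  have hc := c.cauchyΨ_mem k
  rw [Metric.cauchySeq_iff] at hc
  obtain ⟨M, hM⟩ := hc (ε/3) (by linarith)
  refine ⟨M, fun m hm n hn => ?_⟩
  have d1 : dist (c.Ψn m y) (c.Ψn m (c.b k)) ≤ dist y (c.b k) := by
    rw [dist_eq_norm, dist_eq_norm]; exact c.lipΨn m y (c.b k)
  have d3 : dist (c.Ψn n (c.b k)) (c.Ψn n y) ≤ dist (c.b k) y := by
    rw [dist_eq_norm, dist_eq_norm]; exact c.lipΨn n (c.b k) y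
  have := dist_triangle4 (c.Ψn m y) (c.Ψn m (c.b k)) (c.Ψn n (c.b k)) (c.Ψn n y)
  have hd2 := hM m hm n hn
  rw [dist_comm (c.b k) y] at d3
  linarith

noncomputable def ΦL (x : A) : B := limUnder atTop (fun n => c.Φn n x)
noncomputable def ΨL (y : B) : A := limUnder atTop (fun n => c.Ψn n y)

lemma tendstoΦ (x : A) : Tendsto (fun n => c.Φn n x) atTop (𝓝 (c.ΦL x)) :=
  (c.cauchyΦ x).tendsto_limUnder

lemma tendstoΨ (y : B) : Tendsto (fun n => c.Ψn n y) atTop (𝓝 (c.ΨL y)) :=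
  (c.cauchyΨ y).tendsto_limUnder

lemma ΦL_add (x y : A) : c.ΦL (x + y) = c.ΦL x + c.ΦL y := by
  have h : (fun n => c.Φn n x + c.Φn n y) = fun n => c.Φn n (x + y) := by
    funext n; rw [map_add]
  exact tendsto_nhds_unique (c.tendstoΦ (x + y)) (h ▸ ((c.tendstoΦ x).add (c.tendstoΦ y)))

lemma ΦL_mul (x y : A) : c.ΦL (x * y) = c.ΦL x * c.ΦL y := by
  have h : (fun n => c.Φn n x * c.Φn n y) = fun n => c.Φn n (x * y) := by
    funext n; rw [map_mul]
  exact tendsto_nhds_unique (c.tendstoΦ (x * y)) (h ▸ ((c.tendstoΦ x).mul (c.tendstoΦ y)))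

lemma ΦL_star (x : A) : c.ΦL (star x) = star (c.ΦL x) := by
  have h : (fun n => star (c.Φn n x)) = fun n => c.Φn n (star x) := by
    funext n; rw [map_star]
  exact tendsto_nhds_unique (c.tendstoΦ (star x)) (h ▸ (c.tendstoΦ x).star)

lemma ΦL_smul (r : ℂ) (x : A) : c.ΦL (r • x) = r • c.ΦL x := by
  have h : (fun n => r • (c.Φn n x)) = fun n => c.Φn n (r • x) := by
    funext n; rw [map_smul]
  exact tendsto_nhds_unique (c.tendstoΦ (r • x)) (h ▸ (c.tendstoΦ x).const_smul r)

lemma lipΦL (x y : A) : ‖c.ΦL x - c.ΦL y‖ ≤ ‖x - y‖ := by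
  have ht : Tendsto (fun n => ‖c.Φn n x - c.Φn n y‖) atTop (𝓝 ‖c.ΦL x - c.ΦL y‖) :=
    ((c.tendstoΦ x).sub (c.tendstoΦ y)).norm
  exact le_of_tendsto ht (Filter.Eventually.of_forall fun n => c.lipΦn n x y)

lemma contΦL : Continuous c.ΦL := by
  have : LipschitzWith 1 c.ΦL := LipschitzWith.of_dist_le_mul fun x y => by
    rw [dist_eq_norm, dist_eq_norm, NNReal.coe_one, one_mul]; exact c.lipΦL x y
  exact this.continuous

lemma lipΨL (x y : B) : ‖c.ΨL x - c.ΨL y‖ ≤ ‖x - y‖ := by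
  have ht : Tendsto (fun n => ‖c.Ψn n x - c.Ψn n y‖) atTop (𝓝 ‖c.ΨL x - c.ΨL y‖) :=
    ((c.tendstoΨ x).sub (c.tendstoΨ y)).norm
  exact le_of_tendsto ht (Filter.Eventually.of_forall fun n => c.lipΨn n x y)

lemma contΨL : Continuous c.ΨL := by
  have : LipschitzWith 1 c.ΨL := LipschitzWith.of_dist_le_mul fun x y => by
    rw [dist_eq_norm, dist_eq_norm, NNReal.coe_one, one_mul]; exact c.lipΨL x y
  exact this.continuous

lemma ΨΦ_id (x : A) : c.ΨL (c.ΦL x) = x := by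
  have key : Set.EqOn (fun x => c.ΨL (c.ΦL x)) id (⋃ n, (c.Fn n : Set A)) := by
    intro x hx
    obtain ⟨N, hN⟩ := Set.mem_iUnion.mp hx
    have t1 : Tendsto (fun n => c.Ψn n (c.ΦL x)) atTop (𝓝 (c.ΨL (c.ΦL x))) := c.tendstoΨ _
    have t2 : Tendsto (fun n => c.Ψn n (c.ΦL x)) atTop (𝓝 x) := by
      rw [tendsto_iff_dist_tendsto_zero]
      apply squeeze_zero' (Filter.Eventually.of_forall fun n => dist_nonneg)
        (g := fun n => dist (c.ΦL x) (c.Φn n x) + E n)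
      · filter_upwards [eventually_ge_atTop N] with n hn
        have hx' : x ∈ c.Fn n := c.Fn_mono hn hN
        have d1 : dist (c.Ψn n (c.ΦL x)) (c.Ψn n (c.Φn n x)) ≤ dist (c.ΦL x) (c.Φn n x) := by
          rw [dist_eq_norm, dist_eq_norm]; exact c.lipΨn n _ _
        have d2 : dist (c.Ψn n (c.Φn n x)) x ≤ E n := by
          rw [dist_eq_norm]; exact (c.spec1 n x hx').le
        have := dist_triangle (c.Ψn n (c.ΦL x)) (c.Ψn n (c.Φn n x)) x
        linarith
      · have hd : Tendsto (fun n => dist (c.ΦL x) (c.Φn n x)) atTop (𝓝 0) := by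
          have := (c.tendstoΦ x).sub (tendsto_const_nhds (x := c.ΦL x))
          simp only [sub_self] at this
          simpa [dist_eq_norm, norm_sub_rev] using this.norm
        simpa using hd.add E_tendsto
    exact tendsto_nhds_unique t1 t2
  have := Continuous.ext_on c.dense_D (c.contΨL.comp c.contΦL) continuous_id key
  exact congrFun this x

lemma ΦΨ_id (y : B) : c.ΦL (c.ΨL y) = y := by
  have key : Set.EqOn (fun y => c.ΦL (c.ΨL y)) id (Set.range c.b) := by
    rintro _ ⟨k, rfl⟩
    have t1 : Tendsto (fun n => c.Φn (n+1) (c.ΨL (c.b k))) atTop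
        (𝓝 (c.ΦL (c.ΨL (c.b k)))) :=
      (c.tendstoΦ _).comp (tendsto_add_atTop_nat 1)
    have t2 : Tendsto (fun n => c.Φn (n+1) (c.ΨL (c.b k))) atTop (𝓝 (c.b k)) := by
      rw [tendsto_iff_dist_tendsto_zero]
      apply squeeze_zero' (Filter.Eventually.of_forall fun n => dist_nonneg)
        (g := fun n => dist (c.ΨL (c.b k)) (c.Ψn n (c.b k)) + E n)
      · filter_upwards [eventually_ge_atTop k] with n hn
        have hy : c.b k ∈ c.Gn n := c.b_mem_Gn hn
        have d1 : dist (c.Φn (n+1) (c.ΨL (c.b k))) (c.Φn (n+1) (c.Ψn n (c.b k)))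
            ≤ dist (c.ΨL (c.b k)) (c.Ψn n (c.b k)) := by
          rw [dist_eq_norm, dist_eq_norm]; exact c.lipΦn (n+1) _ _
        have d2 : dist (c.Φn (n+1) (c.Ψn n (c.b k))) (c.b k) ≤ E n := by
          rw [dist_eq_norm]; exact (c.spec2 n (c.b k) hy).le
        have := dist_triangle (c.Φn (n+1) (c.ΨL (c.b k))) (c.Φn (n+1) (c.Ψn n (c.b k))) (c.b k)
        linarith
      · have hd : Tendsto (fun n => dist (c.ΨL (c.b k)) (c.Ψn n (c.b k))) atTop (𝓝 0) := by
          have := (c.tendstoΨ (c.b k)).sub (tendsto_const_nhds (x := c.ΨL (c.b k)))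
          simp only [sub_self] at this
          simpa [dist_eq_norm, norm_sub_rev] using this.norm
        simpa using hd.add E_tendsto
    exact tendsto_nhds_unique t1 t2
  have := Continuous.ext_on c.hb (c.contΦL.comp c.contΨL) continuous_id key
  exact congrFun this y

/-- The star algebra isomorphism. -/
noncomputable def equiv : A ≃⋆ₐ[ℂ] B where
  toFun := c.ΦL
  invFun := c.ΨL
  left_inv := c.ΨΦ_id
  right_inv := c.ΦΨ_id
  map_mul' := c.ΦL_mul
  map_add' := c.ΦL_add
  map_star' := c.ΦL_star
  map_smul' := c.ΦL_smul

end Ctx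

end Elliott

/-- Elliott's two-sided intertwining argument: if `φ : A → B` and `ψ : B → A` are unital
`*`-homomorphisms between separable unital C*-algebras with `ψ ∘ φ ≈au id_A` and
`φ ∘ ψ ≈au id_B`, then `A ≅ B`. -/
theorem elliott_two_sided_intertwining
    {A B : Type*} [CStarAlgebra A] [CStarAlgebra B]
    [TopologicalSpace.SeparableSpace A] [TopologicalSpace.SeparableSpace B]
    (φ : A →⋆ₐ[ℂ] B) (ψ : B →⋆ₐ[ℂ] A)
    (h1 : ApproxUnitarilyEquiv (fun a => ψ (φ a)) (id : A → A))
    (h2 : ApproxUnitarilyEquiv (fun b => φ (ψ b)) (id : B → B)) :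
    Nonempty (A ≃⋆ₐ[ℂ] B) := by
  have : Nonempty A := ⟨1⟩
  have : Nonempty B := ⟨1⟩
  obtain ⟨a, ha⟩ := TopologicalSpace.exists_dense_seq A
  obtain ⟨b, hb⟩ := TopologicalSpace.exists_dense_seq B
  exact ⟨(Elliott.Ctx.mk φ ψ h1 h2 a b ha hb).equiv⟩
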